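/- arXiv:2211.03530 — 3 statements merged into one kernel-verified Lean document; each statement's English description precedes it below -/
import Mathlib

section
/- Let G be a tree on n vertices and k a positive integer threshold. Call a vertex v 'light against' a neighbor u if |G_{v↛u}| ≤ k, and 'light' if it is light against at least one neighbor. If every vertex of G is light, then G has at most 2k vertices. -/
open SimpleGraph Finset

/-- In a tree, every path realizes the distance. -/
lemma aux_path_length_eq_dist {V : Type*} {G : SimpleGraph V} (hG : G.IsTree)
    {a b : V} (p : G.Walk a b) (hp : p.IsPath) : p.length = G.dist a b := by
  obtain ⟨q, hq, hql⟩ := hG.isConnected.exists_path_of_dist a b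
  have h := hG.IsAcyclic.path_unique ⟨p, hp⟩ ⟨q, hq⟩
  have : p = q := congrArg Subtype.val h
  rw [this, hql]

/-- In a tree, distances to a fixed vertex from two adjacent vertices differ by one. -/
lemma aux_dist_step {V : Type*} [DecidableEq V] {G : SimpleGraph V} (hG : G.IsTree)
    {v u : V} (h : G.Adj v u) (w : V) :
    G.dist v w = 1 + G.dist u w ∨ G.dist u w = 1 + G.dist v w := by
  obtain ⟨p, hp, hpl⟩ := hG.isConnected.exists_path_of_dist v w
  by_cases hu : u ∈ p.support
  · left
    have hsplit : (p.takeUntil u hu).length + (p.dropUntil u hu).length = p.length := by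
      conv_rhs => rw [← p.take_spec hu]
      rw [SimpleGraph.Walk.length_append]
    have h1 : G.dist v u ≤ (p.takeUntil u hu).length := SimpleGraph.dist_le _
    have h2 : G.dist u w ≤ (p.dropUntil u hu).length := SimpleGraph.dist_le _
    have htri : G.dist v w ≤ G.dist v u + G.dist u w :=
      hG.isConnected.dist_triangle
    have hvu : G.dist v u = 1 := SimpleGraph.dist_eq_one_iff_adj.mpr h
    omega
  · right
    have hq : (SimpleGraph.Walk.cons h.symm p).IsPath := hp.cons hu
    have := aux_path_length_eq_dist hG _ hq
    rw [SimpleGraph.Walk.length_cons, hpl] at this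
    omega

/-- In a tree, a vertex has at most one neighbor closer to the root. -/
lemma aux_parent_unique {V : Type*} [DecidableEq V] {G : SimpleGraph V} (hG : G.IsTree)
    {x0 a b c : V} {d : ℕ} (hab : G.Adj a b) (hcb : G.Adj c b)
    (ha : G.dist x0 a = d) (hc : G.dist x0 c = d) (hb : G.dist x0 b = d + 1) :
    a = c := by
  obtain ⟨p, hp, hpl⟩ := hG.isConnected.exists_path_of_dist a x0
  obtain ⟨q, hq, hql⟩ := hG.isConnected.exists_path_of_dist c x0
  rw [SimpleGraph.dist_comm] at ha hc
  have hbp : b ∉ p.support := by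
    intro hmem
    have hsplit : (p.takeUntil b hmem).length + (p.dropUntil b hmem).length = p.length := by
      conv_rhs => rw [← p.take_spec hmem]
      rw [SimpleGraph.Walk.length_append]
    have h2 : G.dist b x0 ≤ (p.dropUntil b hmem).length := SimpleGraph.dist_le _
    rw [SimpleGraph.dist_comm] at hb
    omega
  have hbq : b ∉ q.support := by
    intro hmem
    have hsplit : (q.takeUntil b hmem).length + (q.dropUntil b hmem).length = q.length := by
      conv_rhs => rw [← q.take_spec hmem]
      rw [SimpleGraph.Walk.length_append]
    have h2 : G.dist b x0 ≤ (q.dropUntil b hmem).length := SimpleGraph.dist_le _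
    rw [SimpleGraph.dist_comm] at hb
    omega
  have hP : (SimpleGraph.Walk.cons hab.symm p).IsPath := hp.cons hbp
  have hQ : (SimpleGraph.Walk.cons hcb.symm q).IsPath := hq.cons hbq
  have heq := hG.IsAcyclic.path_unique ⟨_, hP⟩ ⟨_, hQ⟩
  have heq' : (SimpleGraph.Walk.cons hab.symm p) = (SimpleGraph.Walk.cons hcb.symm q) :=
    congrArg Subtype.val heq
  have hsup := congrArg SimpleGraph.Walk.support heq'
  rw [SimpleGraph.Walk.support_cons, SimpleGraph.Walk.support_cons,
    p.support_eq_cons, q.support_eq_cons] at hsup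
  simp only [List.cons.injEq] at hsup
  exact hsup.2.1

/-- Let `G` be a tree on `n` vertices and `k ≥ 1` a threshold. A vertex `v` is light
against a neighbor `u` if `|G_{v↛u}| ≤ k`, where `G_{v↛u}` is the set of vertices `w`
such that `u` does not lie on the unique path from `v` to `w`. If every vertex is light
(light against at least one neighbor), then `n ≤ 2k`. -/
theorem stmt_4 {V : Type*} [Fintype V] [DecidableEq V]
    (G : SimpleGraph V) (hG : G.IsTree) (k : ℕ) (hk : 1 ≤ k)
    (hlight : ∀ v : V, ∃ u : V, G.Adj v u ∧
      (Finset.univ \ Finset.univ.filter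
        (fun w => G.dist v u + G.dist u w = G.dist v w)).card ≤ k) :
    Fintype.card V ≤ 2 * k := by
  by_contra hcon
  push_neg at hcon
  set A : V → V → Finset V := fun v u => Finset.univ.filter
    (fun w => G.dist v u + G.dist u w = G.dist v w) with hA
  -- complement identity for adjacent vertices
  have hcompl : ∀ v u : V, G.Adj v u → Finset.univ \ A v u = A u v := by
    intro v u h
    ext w
    have hvu : G.dist v u = 1 := SimpleGraph.dist_eq_one_iff_adj.mpr h
    have huv : G.dist u v = 1 := SimpleGraph.dist_eq_one_iff_adj.mpr h.symm
    have hstep := aux_dist_step hG h w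
    simp only [hA, Finset.mem_sdiff, Finset.mem_filter, Finset.mem_univ, true_and, hvu, huv]
    omega
  choose f hf1 hf2 using hlight
  have hf2' : ∀ v : V, (A (f v) v).card ≤ k := by
    intro v
    rw [← hcompl v (f v) (hf1 v)]
    exact hf2 v
  have hpart : ∀ v : V, (A v (f v)).card + (A (f v) v).card = Fintype.card V := by
    intro v
    rw [← hcompl v (f v) (hf1 v)]
    have h := Finset.card_sdiff_add_card_eq_card (Finset.subset_univ (A v (f v)))
    rw [Finset.card_univ] at h
    omega
  have hnb : ∀ v : V, f (f v) ≠ v := by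
    intro v hvv
    have h1 := hf2' v
    have h2 := hf2' (f v)
    rw [hvv] at h2
    have := hpart v
    omega
  -- build an infinite non-backtracking walk
  have hne : Nonempty V := by
    rw [← Fintype.card_pos_iff]; omega
  obtain ⟨x0⟩ := hne
  set x : ℕ → V := fun i => f^[i] x0 with hx
  have hxs : ∀ i, x (i + 1) = f (x i) := by
    intro i
    simp [hx, Function.iterate_succ_apply']
  have hadj : ∀ i, G.Adj (x i) (x (i + 1)) := by
    intro i; rw [hxs i]; exact hf1 (x i)
  have hnbx : ∀ i, x (i + 2) ≠ x i := by
    intro i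
    have : x (i + 2) = f (f (x i)) := by rw [hxs (i+1), hxs i]
    rw [this]
    exact hnb (x i)
  have hdist : ∀ i, G.dist x0 (x i) = i ∧ G.dist x0 (x (i + 1)) = i + 1 := by
    intro i
    induction i with
    | zero =>
      constructor
      · simp [hx]
      · have : G.dist x0 (x 1) = 1 := by
          rw [SimpleGraph.dist_eq_one_iff_adj]
          have := hadj 0
          simpa [hx] using this
        simpa using this
    | succ n ih =>
      obtain ⟨ih1, ih2⟩ := ih
      refine ⟨ih2, ?_⟩
      have hstep := aux_dist_step hG (hadj (n + 1)) x0
      have hxx : x (n + 1 + 1) = x (n + 2) := by norm_num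
      rw [hxx] at hstep ⊢
      have e1 : G.dist (x (n+1)) x0 = G.dist x0 (x (n+1)) := SimpleGraph.dist_comm
      have e2 : G.dist (x (n+2)) x0 = G.dist x0 (x (n+2)) := SimpleGraph.dist_comm
      rcases hstep with h | h
      · -- going back: contradiction via parent uniqueness
        exfalso
        have hc : G.dist x0 (x (n + 2)) = n := by omega
        have hadj' : G.Adj (x (n + 2)) (x (n + 1)) := by
          have := (hadj (n + 1)).symm
          rwa [hxx] at this
        have : x n = x (n + 2) :=
          aux_parent_unique hG (hadj n) hadj' ih1 hc ih2
        exact hnbx n this.symm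
      · omega
  have hinj : Function.Injective x := by
    intro i j hij
    have hi := (hdist i).1
    have hj := (hdist j).1
    rw [hij] at hi
    omega
  exact (Finite.exists_ne_map_eq_of_infinite x).elim
    (fun i hi => hi.elim (fun j hj => hj.1 (hinj hj.2)))
end

section
/- Let G be a tree containing at least one heavy vertex (a vertex not light against any neighbor, where light against u means |G_{v↛u}| ≤ k). If v is light against u, then every vertex in G_{v↛u} is light; moreover every x ∈ G_{v↛u} with x ≠ v is light against its neighbor on the path from x to v. -/
/-- `Gnot G v u` is the set `G_{v↛u}` of vertices `w` such that `u` does not lie on the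
unique path from `v` to `w` (expressed via distances). -/
noncomputable def Gnot {V : Type*} [Fintype V] [DecidableEq V]
    (G : SimpleGraph V) (v u : V) : Finset V :=
  Finset.univ \ Finset.univ.filter (fun w => G.dist v u + G.dist u w = G.dist v w)

/-- A vertex is light (w.r.t. threshold `k`) if it is light against some neighbor. -/
def Light {V : Type*} [Fintype V] [DecidableEq V]
    (G : SimpleGraph V) (k : ℕ) (v : V) : Prop :=
  ∃ u : V, G.Adj v u ∧ (Gnot G v u).card ≤ k

namespace SimpleGraph.IsTree

variable {V : Type*} [DecidableEq V] {G : SimpleGraph V}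

/-- In a tree, every path realizes the distance between its endpoints. -/
lemma length_eq_dist (hG : G.IsTree) {a b : V} (p : G.Walk a b) (hp : p.IsPath) :
    p.length = G.dist a b := by
  obtain ⟨q, hq, hlen⟩ := hG.isConnected.exists_path_of_dist a b
  rw [(hG.existsUnique_path a b).unique hp hq, hlen]

/-- Additivity of distance along a path in a tree. -/
lemma dist_eq_of_mem_support (hG : G.IsTree) {a b c : V} (p : G.Walk a b)
    (hp : p.IsPath) (hc : c ∈ p.support) :
    G.dist a b = G.dist a c + G.dist c b := by
  have h1 := hG.length_eq_dist _ (hp.takeUntil hc)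
  have h2 := hG.length_eq_dist _ (hp.dropUntil hc)
  have h3 := congrArg SimpleGraph.Walk.length (p.take_spec hc)
  rw [SimpleGraph.Walk.length_append] at h3
  rw [← hG.length_eq_dist p hp, ← h3, h1, h2]

/-- In a tree, distances from adjacent vertices differ by exactly one. -/
lemma dist_step (hG : G.IsTree) {a b : V} (hab : G.Adj a b) (w : V) :
    G.dist a w = G.dist b w + 1 ∨ G.dist b w = G.dist a w + 1 := by
  obtain ⟨p, hp, hlen⟩ := hG.isConnected.exists_path_of_dist b w
  by_cases ha : a ∈ p.support
  · right
    have := hG.dist_eq_of_mem_support p hp ha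
    rw [SimpleGraph.dist_eq_one_iff_adj.2 hab.symm] at this
    omega
  · left
    have hcons : (SimpleGraph.Walk.cons hab p).IsPath :=
      SimpleGraph.Walk.cons_isPath_iff _ _ |>.2 ⟨hp, ha⟩
    have := hG.length_eq_dist _ hcons
    rw [SimpleGraph.Walk.length_cons, hlen] at this
    omega

end SimpleGraph.IsTree

lemma mem_Gnot_iff {V : Type*} [Fintype V] [DecidableEq V] {G : SimpleGraph V}
    (hG : G.IsTree) {v u : V} (hadj : G.Adj v u) (w : V) :
    w ∈ Gnot G v u ↔ G.dist u w = G.dist v w + 1 := by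
  have h1 : G.dist v u = 1 := SimpleGraph.dist_eq_one_iff_adj.2 hadj
  simp only [Gnot, Finset.mem_sdiff, Finset.mem_filter, Finset.mem_univ, true_and, h1]
  constructor
  · intro h
    rcases hG.dist_step hadj w with h2 | h2
    · omega
    · exact h2
  · intro h
    omega

/-- If a tree `G` contains a heavy vertex and `v` is light against its neighbor `u`,
then every vertex `x ∈ G_{v↛u}` is light; moreover every such `x ≠ v` is light against
its neighbor on the unique path from `x` to `v`. -/
theorem stmt_5 {V : Type*} [Fintype V] [DecidableEq V]
    (G : SimpleGraph V) (hG : G.IsTree) (k : ℕ) (hk : 1 ≤ k)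
    (hheavy : ∃ h : V, ¬ Light G k h)
    (v u : V) (hadj : G.Adj v u) (hvu : (Gnot G v u).card ≤ k) :
    ∀ x ∈ Gnot G v u, Light G k x ∧
      (x ≠ v → ∀ y : V, G.Adj x y → G.dist y v + 1 = G.dist x v →
        (Gnot G x y).card ≤ k) := by
  intro x hx
  have hconn := hG.isConnected
  have hx' : G.dist u x = G.dist v x + 1 := (mem_Gnot_iff hG hadj x).1 hx
  -- the key claim: part (ii)
  have key : ∀ y : V, G.Adj x y → G.dist y v + 1 = G.dist x v → (Gnot G x y).card ≤ k := by
    intro y hxy hy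
    refine le_trans (Finset.card_le_card ?_) hvu
    intro w hw
    have hw' : G.dist y w = G.dist x w + 1 := (mem_Gnot_iff hG hxy w).1 hw
    rw [mem_Gnot_iff hG hadj]
    by_contra hcon
    have h4 : G.dist v w = G.dist u w + 1 := by
      rcases hG.dist_step hadj w with h | h
      · exact h
      · exact absurd h hcon
    -- B(x,y,u) : dist x u = 1 + dist y u
    have hxyd : G.dist x y = 1 := SimpleGraph.dist_eq_one_iff_adj.2 hxy
    have hvud : G.dist v u = 1 := SimpleGraph.dist_eq_one_iff_adj.2 hadj
    have t1 : G.dist y u ≤ G.dist y v + G.dist v u := hconn.dist_triangle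
    have t2 : G.dist x u ≤ G.dist x y + G.dist y u := hconn.dist_triangle
    have hxu : G.dist x u = G.dist x v + 1 := by
      have e1 : G.dist x u = G.dist u x := SimpleGraph.dist_comm
      have e2 : G.dist x v = G.dist v x := SimpleGraph.dist_comm
      omega
    have hxyu : G.dist x u = 1 + G.dist y u := by omega
    -- u lies on the path from v to w (since dist v w = dist v u + dist u w)
    obtain ⟨p, hp, hplen⟩ := hconn.exists_path_of_dist v x
    obtain ⟨q, hq, hqlen⟩ := hconn.exists_path_of_dist x w
    have hbp : ((p.append q).bypass).IsPath := SimpleGraph.Walk.bypass_isPath _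
    have hbpu : u ∈ (p.append q).bypass.support := by
      obtain ⟨r, hr, hrlen⟩ := hconn.exists_path_of_dist v u
      obtain ⟨s, hs, hslen⟩ := hconn.exists_path_of_dist u w
      have hlen : (r.append s).length = G.dist v w := by
        rw [SimpleGraph.Walk.length_append, hrlen, hslen, hvud]; omega
      have hrs : (r.append s).IsPath := (r.append s).isPath_of_length_eq_dist hlen
      have heq : r.append s = (p.append q).bypass := (hG.existsUnique_path v w).unique hrs hbp
      rw [← heq]
      exact (SimpleGraph.Walk.mem_support_append_iff _ _).2 (Or.inl r.end_mem_support)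
    -- u is on p or on q
    have hsub := SimpleGraph.Walk.support_bypass_subset (p.append q)
    have := (SimpleGraph.Walk.mem_support_append_iff _ _).1 (hsub hbpu)
    rcases this with hup | huq
    · -- u on path v → x : contradiction with dist u x = dist v x + 1
      have := hG.dist_eq_of_mem_support p hp hup
      have e2 : G.dist x v = G.dist v x := SimpleGraph.dist_comm
      omega
    · -- u on path x → w : dist x w = dist x u + dist u w
      have hB := hG.dist_eq_of_mem_support q hq huq
      have t3 : G.dist y w ≤ G.dist y u + G.dist u w := hconn.dist_triangle
      omega
  constructor
  · by_cases hxv : x = v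
    · subst hxv; exact ⟨u, hadj, hvu⟩
    · -- find the neighbor of x towards v
      obtain ⟨p, hp, hplen⟩ := hconn.exists_path_of_dist x v
      cases p with
      | nil => exact absurd rfl hxv
      | cons h q =>
        rename_i y
        have hq : q.IsPath := (SimpleGraph.Walk.cons_isPath_iff _ _).1 hp |>.1
        have hqlen := hG.length_eq_dist q hq
        rw [SimpleGraph.Walk.length_cons] at hplen
        exact ⟨y, h, key y h (by omega)⟩
  · intro _ ; exact key
end

section
/- Let T be a tree with diameter D, and for each vertex v and neighbor u define B_{v→u} = ∑_{w ∈ G_{v→u}} |G_{w↛r_w(v)}|, where r_w(v) is the neighbor of w on the path from w to v. Then |G_{v→u}| ≤ B_{v→u} ≤ (D+1)·|G_{v→u}|. -/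
open SimpleGraph Finset

namespace TreeAux
set_option linter.unusedSectionVars false

variable {V : Type*} [DecidableEq V] {G : SimpleGraph V}

lemma path_unique (hG : G.IsTree) {x y : V} {p q : G.Walk x y}
    (hp : p.IsPath) (hq : q.IsPath) : p = q :=
  (hG.existsUnique_path x y).unique hp hq

lemma path_length (hG : G.IsTree) {x y : V} {p : G.Walk x y} (hp : p.IsPath) :
    p.length = G.dist x y := by
  obtain ⟨q, hq⟩ := hG.isConnected.exists_walk_length_eq_dist x y
  have hb : q.bypass.IsPath := q.bypass_isPath
  have he : p = q.bypass := path_unique hG hp hb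
  refine le_antisymm ?_ (G.dist_le p)
  calc p.length = q.bypass.length := by rw [he]
    _ ≤ q.length := q.length_bypass_le
    _ = G.dist x y := hq

noncomputable def pth (hG : G.IsTree) (x y : V) : G.Walk x y :=
  (hG.existsUnique_path x y).exists.choose

lemma pth_isPath (hG : G.IsTree) (x y : V) : (pth hG x y).IsPath :=
  (hG.existsUnique_path x y).exists.choose_spec

lemma pth_eq (hG : G.IsTree) {x y : V} {p : G.Walk x y} (hp : p.IsPath) :
    p = pth hG x y :=
  path_unique hG hp (pth_isPath hG x y)

lemma dist_add_of_mem (hG : G.IsTree) {x z : V} {p : G.Walk x z} (hp : p.IsPath)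
    {y : V} (h : y ∈ p.support) :
    G.dist x y + G.dist y z = G.dist x z := by
  have ht := hp.takeUntil h
  have hd := hp.dropUntil h
  have hl := congrArg Walk.length (p.take_spec h)
  rw [Walk.length_append] at hl
  rw [← path_length hG ht, ← path_length hG hd, hl, path_length hG hp]

lemma mem_or_mem (hG : G.IsTree) {a b : V} (hab : G.Adj a b) (z : V) :
    b ∈ (pth hG a z).support ∨ a ∈ (pth hG b z).support := by
  by_cases h : a ∈ (pth hG b z).support
  · exact Or.inr h
  · left
    have hc : (Walk.cons hab (pth hG b z)).IsPath := (pth_isPath hG b z).cons h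
    rw [← pth_eq hG hc]
    simp [Walk.support_cons, Walk.start_mem_support]

lemma dist_succ_or (hG : G.IsTree) {a b : V} (hab : G.Adj a b) (z : V) :
    G.dist a z = 1 + G.dist b z ∨ G.dist b z = 1 + G.dist a z := by
  have h1 : G.dist a b = 1 := dist_eq_one_iff_adj.mpr hab
  have h2 : G.dist b a = 1 := dist_eq_one_iff_adj.mpr hab.symm
  rcases mem_or_mem hG hab z with h | h
  · left
    have := dist_add_of_mem hG (pth_isPath hG a z) h
    omega
  · right
    have := dist_add_of_mem hG (pth_isPath hG b z) h
    omega

lemma mem_iff_dist (hG : G.IsTree) {a b : V} (hab : G.Adj a b) (z : V) :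
    b ∈ (pth hG a z).support ↔ G.dist a z = 1 + G.dist b z := by
  have h1 : G.dist a b = 1 := dist_eq_one_iff_adj.mpr hab
  have h2 : G.dist b a = 1 := dist_eq_one_iff_adj.mpr hab.symm
  constructor
  · intro h
    have := dist_add_of_mem hG (pth_isPath hG a z) h
    omega
  · intro h
    rcases mem_or_mem hG hab z with h' | h'
    · exact h'
    · have := dist_add_of_mem hG (pth_isPath hG b z) h'
      omega

lemma mem_pth_comm (hG : G.IsTree) {a b x : V} (h : x ∈ (pth hG a b).support) :
    x ∈ (pth hG b a).support := by
  have hr : ((pth hG a b).reverse).IsPath := (pth_isPath hG a b).reverse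
  rw [← pth_eq hG hr, Walk.support_reverse, List.mem_reverse]
  exact h

lemma eq_of_mem_take_drop {a c u : V} {p : G.Walk a c} (hp : p.IsPath) (hu : u ∈ p.support)
    {x : V} (hx1 : x ∈ (p.takeUntil u hu).support) (hx2 : x ∈ (p.dropUntil u hu).support) :
    x = u := by
  have hn : p.support.Nodup := hp.support_nodup
  rw [← p.take_spec hu, Walk.support_append] at hn
  rw [Walk.support_eq_cons (p.dropUntil u hu)] at hx2
  rcases List.mem_cons.1 hx2 with h | h
  · exact h
  · exact absurd hx1 (fun hx1 => (List.disjoint_of_nodup_append hn) hx1 h)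

lemma crossing (hG : G.IsTree) {a b w z : V} (hab : G.Adj a b)
    (h1 : a ∈ (pth hG w b).support) (h2 : b ∈ (pth hG a z).support) :
    b ∈ (pth hG w z).support := by
  have hq : (pth hG w b).IsPath := pth_isPath hG w b
  set q := pth hG w b with hqdef
  have hp1 : (q.takeUntil a h1).IsPath := hq.takeUntil h1
  have hbp1 : b ∉ (q.takeUntil a h1).support := by
    intro hb
    exact hab.ne (eq_of_mem_take_drop hq h1 hb (Walk.end_mem_support _)).symm
  have hpz : (pth hG a z).IsPath := pth_isPath hG a z
  have hp2 : ((pth hG a z).dropUntil b h2).IsPath := hpz.dropUntil h2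
  set p2 := (pth hG a z).dropUntil b h2 with hp2def
  have hap2 : a ∉ p2.support := by
    intro ha
    exact hab.ne (eq_of_mem_take_drop hpz h2 (Walk.start_mem_support _) ha)
  have hdisj : ∀ x ∈ (q.takeUntil a h1).support, x ∉ p2.support := by
    intro x hx1 hx2
    -- (i) a ∈ (pth hG x b).support
    have hp1xP : ((q.takeUntil a h1).dropUntil x hx1).IsPath := hp1.dropUntil hx1
    have hbnot : b ∉ ((q.takeUntil a h1).dropUntil x hx1).support := fun hb =>
      hbp1 ((q.takeUntil a h1).support_dropUntil_subset hx1 hb)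
    have hW2 : (((q.takeUntil a h1).dropUntil x hx1).append (Walk.cons hab Walk.nil)).IsPath := by
      rw [Walk.isPath_def, Walk.support_append]
      simp only [Walk.support_cons, Walk.support_nil, List.tail_cons]
      simp [List.nodup_append, hp1xP.support_nodup, hbnot]
      exact fun y hy hyb => hbnot (hyb ▸ hy)
    have hmem1 : a ∈ (pth hG x b).support := by
      rw [← pth_eq hG hW2, Walk.support_append]
      simp only [List.mem_append]
      exact Or.inl (Walk.end_mem_support _)
    -- (ii) a ∉ (pth hG x b).support
    have ht3 : (p2.takeUntil x hx2).IsPath := hp2.takeUntil hx2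
    have hanot3 : a ∉ (p2.takeUntil x hx2).support := fun ha =>
      hap2 (p2.support_takeUntil_subset hx2 ha)
    have hrev : ((p2.takeUntil x hx2).reverse).IsPath := ht3.reverse
    rw [← pth_eq hG hrev, Walk.support_reverse, List.mem_reverse] at hmem1
    exact hanot3 hmem1
  have hW : ((q.takeUntil a h1).append (Walk.cons hab p2)).IsPath := by
    rw [Walk.isPath_def, Walk.support_append]
    simp only [Walk.support_cons, List.tail_cons]
    exact List.Nodup.append hp1.support_nodup hp2.support_nodup hdisj
  rw [← pth_eq hG hW, Walk.support_append]
  simp only [Walk.support_cons, List.tail_cons, List.mem_append]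
  exact Or.inr (Walk.start_mem_support p2)

lemma dist_inj_on_path (hG : G.IsTree) {a c : V} (p : G.Walk a c) :
    p.IsPath → ∀ x ∈ p.support, ∀ y ∈ p.support, G.dist a x = G.dist a y → x = y := by
  induction p with
  | nil =>
    intro _ x hx y hy _
    simp only [Walk.support_nil, List.mem_singleton] at hx hy
    rw [hx, hy]
  | @cons a b c h q ih =>
    intro hp x hx y hy hxy
    rw [Walk.cons_isPath_iff] at hp
    have key : ∀ t ∈ q.support, G.dist a t = 1 + G.dist b t := by
      intro t ht
      have htp : (q.takeUntil t ht).IsPath := hp.1.takeUntil ht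
      have hat : a ∉ (q.takeUntil t ht).support := fun hh =>
        hp.2 (q.support_takeUntil_subset ht hh)
      have hc : (Walk.cons h (q.takeUntil t ht)).IsPath := htp.cons hat
      have h1 := path_length hG hc
      rw [Walk.length_cons, path_length hG htp] at h1
      omega
    have h0 : G.dist a a = 0 := by simp
    rw [Walk.support_cons] at hx hy
    rcases List.mem_cons.1 hx with hx' | hx' <;> rcases List.mem_cons.1 hy with hy' | hy'
    · rw [hx', hy']
    · subst hx'; have := key y hy'; omega
    · subst hy'; have := key x hx'; omega
    · have k1 := key x hx'
      have k2 := key y hy'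
      exact ih hp.1 x hx' y hy' (by omega)

end TreeAux

open TreeAux in
/-- Let `G` be a tree with diameter at most `D` and `v, u` adjacent. Let
`G_{v→u} = {w : u lies on the unique path from v to w}` and for each `w ∈ G_{v→u}` let
`r w` be the neighbor of `w` on the unique path from `w` to `v`. With
`B_{v→u} = ∑_{w ∈ G_{v→u}} |G_{w↛r w}|`, we have
`|G_{v→u}| ≤ B_{v→u} ≤ (D+1)·|G_{v→u}|`. -/
theorem stmt_13 {V : Type*} [Fintype V] [DecidableEq V]
    (G : SimpleGraph V) (hG : G.IsTree)
    (D : ℕ) (hD : ∀ x y : V, G.dist x y ≤ D)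
    (v u : V) (hadj : G.Adj v u) (r : V → V)
    (hr : ∀ w ∈ Finset.univ.filter (fun w => G.dist v u + G.dist u w = G.dist v w),
      G.Adj w (r w) ∧ G.dist (r w) v + 1 = G.dist w v) :
    (Finset.univ.filter (fun w => G.dist v u + G.dist u w = G.dist v w)).card
      ≤ ∑ w ∈ Finset.univ.filter (fun w => G.dist v u + G.dist u w = G.dist v w),
          (Finset.univ \ Finset.univ.filter
            (fun z => G.dist w (r w) + G.dist (r w) z = G.dist w z)).card ∧
    ∑ w ∈ Finset.univ.filter (fun w => G.dist v u + G.dist u w = G.dist v w),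
        (Finset.univ \ Finset.univ.filter
          (fun z => G.dist w (r w) + G.dist (r w) z = G.dist w z)).card
      ≤ (D + 1) *
        (Finset.univ.filter (fun w => G.dist v u + G.dist u w = G.dist v w)).card := by
  have h1 : G.dist v u = 1 := SimpleGraph.dist_eq_one_iff_adj.mpr hadj
  set S := Finset.univ.filter (fun w => G.dist v u + G.dist u w = G.dist v w) with hSdef
  -- facts about members of S
  have hmemS : ∀ w, w ∈ S ↔ G.dist v u + G.dist u w = G.dist v w := by
    intro w; rw [hSdef, Finset.mem_filter]; simp
  have hrmem : ∀ w ∈ S, (r w) ∈ (pth hG w v).support := by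
    intro w hw
    obtain ⟨hadjr, hdr⟩ := hr w hw
    exact (mem_iff_dist hG hadjr v).mpr (by omega)
  have hrmem' : ∀ w ∈ S, (r w) ∈ (pth hG v w).support := fun w hw =>
    mem_pth_comm hG (hrmem w hw)
  -- rewrite sum
  have hsum : ∑ w ∈ S, (Finset.univ \ Finset.univ.filter
        (fun z => G.dist w (r w) + G.dist (r w) z = G.dist w z)).card
      = ∑ z : V, (S.filter
        (fun w => ¬ (G.dist w (r w) + G.dist (r w) z = G.dist w z))).card := by
    simp only [← Finset.filter_not, Finset.card_filter]
    exact Finset.sum_comm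
  -- Claim A
  have claimA : ∀ z, z ∉ S →
      S.filter (fun w => ¬ (G.dist w (r w) + G.dist (r w) z = G.dist w z)) = ∅ := by
    intro z hz
    rw [Finset.filter_eq_empty_iff]
    intro w hw
    rw [not_not]
    rw [hmemS] at hz
    have hz' : G.dist u z = 1 + G.dist v z := by
      rcases dist_succ_or hG hadj z with h | h
      · omega
      · exact h
    have hv_mem : v ∈ (pth hG u z).support := (mem_iff_dist hG hadj.symm z).mpr hz'
    have hw' := (hmemS w).1 hw
    have hu_mem : u ∈ (pth hG v w).support := (mem_iff_dist hG hadj w).mpr (by omega)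
    have hu_mem' : u ∈ (pth hG w v).support := mem_pth_comm hG hu_mem
    have hcross : v ∈ (pth hG w z).support := crossing hG hadj.symm hu_mem' hv_mem
    have htake : ((pth hG w z).takeUntil v hcross).IsPath :=
      (pth_isPath hG w z).takeUntil hcross
    have hr_mem := hrmem w hw
    rw [← pth_eq hG htake] at hr_mem
    have : r w ∈ (pth hG w z).support :=
      (pth hG w z).support_takeUntil_subset hcross hr_mem
    exact dist_add_of_mem hG (pth_isPath hG w z) this
  -- key membership for the injectivity bound
  have claimKey : ∀ z, ∀ w ∈ S,
      ¬ (G.dist w (r w) + G.dist (r w) z = G.dist w z) → w ∈ (pth hG v z).support := by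
    intro z w hw hQ
    obtain ⟨hadjr, hdr⟩ := hr w hw
    have hwr1 : G.dist w (r w) = 1 := SimpleGraph.dist_eq_one_iff_adj.mpr hadjr
    have hcase : G.dist (r w) z = 1 + G.dist w z := by
      rcases dist_succ_or hG hadjr z with h | h
      · omega
      · exact h
    have hwm : w ∈ (pth hG (r w) z).support := (mem_iff_dist hG hadjr.symm z).mpr hcase
    exact crossing hG hadjr.symm (hrmem' w hw) hwm
  -- Claim B: cardinal bound
  have claimB : ∀ z,
      (S.filter (fun w => ¬ (G.dist w (r w) + G.dist (r w) z = G.dist w z))).card ≤ D + 1 := by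
    intro z
    have := Finset.card_le_card_of_injOn (fun w => G.dist v w)
      (s := S.filter (fun w => ¬ (G.dist w (r w) + G.dist (r w) z = G.dist w z)))
      (t := Finset.range (D + 1))
      (fun w _ => Finset.mem_range.mpr (by show G.dist v w < D + 1; exact Nat.lt_succ_of_le (hD v w)))
      (fun w hw w' hw' heq => by
        rw [Finset.mem_coe, Finset.mem_filter] at hw hw'
        exact dist_inj_on_path hG (pth hG v z) (pth_isPath hG v z)
          w (claimKey z w hw.1 hw.2) w' (claimKey z w' hw'.1 hw'.2) heq)
    rwa [Finset.card_range] at this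
  -- Claim C: each z ∈ S is counted
  have claimC : ∀ z ∈ S,
      z ∈ S.filter (fun w => ¬ (G.dist w (r w) + G.dist (r w) z = G.dist w z)) := by
    intro z hz
    rw [Finset.mem_filter]
    refine ⟨hz, ?_⟩
    obtain ⟨hadjr, hdr⟩ := hr z hz
    have h2 : G.dist z (r z) = 1 := SimpleGraph.dist_eq_one_iff_adj.mpr hadjr
    have h3 : G.dist (r z) z = 1 := SimpleGraph.dist_eq_one_iff_adj.mpr hadjr.symm
    have h4 : G.dist z z = 0 := by simp
    omega
  rw [hsum]
  constructor
  · calc S.card = ∑ _z ∈ S, 1 := by simp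
      _ ≤ ∑ z ∈ S, (S.filter
            (fun w => ¬ (G.dist w (r w) + G.dist (r w) z = G.dist w z))).card :=
          Finset.sum_le_sum (fun z hz => Finset.card_pos.mpr ⟨z, claimC z hz⟩)
      _ ≤ ∑ z : V, (S.filter
            (fun w => ¬ (G.dist w (r w) + G.dist (r w) z = G.dist w z))).card :=
          Finset.sum_le_sum_of_subset (Finset.subset_univ S)
  · have hrestrict : ∑ z : V, (S.filter
        (fun w => ¬ (G.dist w (r w) + G.dist (r w) z = G.dist w z))).card
        = ∑ z ∈ S, (S.filter
        (fun w => ¬ (G.dist w (r w) + G.dist (r w) z = G.dist w z))).card :=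
      (Finset.sum_subset (Finset.subset_univ S)
        (fun z _ hz => by rw [claimA z hz, Finset.card_empty])).symm
    rw [hrestrict]
    calc ∑ z ∈ S, (S.filter
          (fun w => ¬ (G.dist w (r w) + G.dist (r w) z = G.dist w z))).card
        ≤ ∑ _z ∈ S, (D + 1) := Finset.sum_le_sum (fun z _ => claimB z)
      _ = (D + 1) * S.card := by rw [Finset.sum_const, smul_eq_mul, Nat.mul_comm]
end
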